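/- arXiv:2211.03821 — 2 statements merged into one kernel-verified Lean document; each statement's English description precedes it below -/
import Mathlib

section
/- Let D ⊂ R^d be measurable with |D| < ∞, and for m ∈ N ∪ {∞} let D = ⋃_{j=1}^m D_j with |D_j| > 0 and D_j ∩ D_k = ∅ for j ≠ k. Let τ_j be translations of R^d such that τ_j(D_j) ∩ τ_k(D_k) = ∅ for j ≠ k, and set D̃ = ⋃_{j=1}^m τ_j(D_j). If B = {ψ_n}_{n∈N} ⊂ L²(D) is a Riesz basis for L²(D) with frame constants A and B, then B̃ = {x ↦ ∑_{j=1}^m χ_{τ_j(D_j)}(x) ψ_n(τ_j^{−1}x)}_{n∈N} is a Riesz basis for L²(D̃) with the same frame constants. -/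
open MeasureTheory Complex Set

/-- The complex exponential `e^{2πit}`. -/
noncomputable def e2 (t : ℝ) : ℂ := Complex.exp (2 * Real.pi * Complex.I * t)

/-- `v` is a Riesz basis for `L²(μ)` with frame constants `A ≤ B`. -/
def IsRieszBasisWith {α : Type*} [MeasurableSpace α] (μ : Measure α)
    {ι : Type*} (v : ι → α → ℂ) (A B : ℝ) : Prop :=
  0 < A ∧ A ≤ B ∧
  (∀ (s : Finset ι) (a : ι → ℂ),
      A * ∑ n ∈ s, ‖a n‖ ^ 2 ≤ (∫ x, ‖∑ n ∈ s, a n * v n x‖ ^ 2 ∂μ) ∧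
      (∫ x, ‖∑ n ∈ s, a n * v n x‖ ^ 2 ∂μ) ≤ B * ∑ n ∈ s, ‖a n‖ ^ 2) ∧
  (∀ w : α → ℂ, MemLp w 2 μ →
      A * (∫ x, ‖w x‖ ^ 2 ∂μ) ≤ (∑' n : ι, ‖∫ x, w x * (starRingEnd ℂ) (v n x) ∂μ‖ ^ 2) ∧
      (∑' n : ι, ‖∫ x, w x * (starRingEnd ℂ) (v n x) ∂μ‖ ^ 2) ≤ B * ∫ x, ‖w x‖ ^ 2 ∂μ)

section Helpers

variable {d : ℕ} {ι : Type*} [Countable ι]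

/-- The transported function `∑ⱼ χ_{tⱼ} f(· - τⱼ)`. -/
noncomputable def trFun {M : Type*} [AddCommMonoid M] [TopologicalSpace M]
    (t : ι → Set (EuclideanSpace ℝ (Fin d))) (τ : ι → EuclideanSpace ℝ (Fin d)) (f : EuclideanSpace ℝ (Fin d) → M) : EuclideanSpace ℝ (Fin d) → M :=
  fun x => ∑' j, Set.indicator (t j) (fun z => f (z - τ j)) x

lemma img_measurable (c : EuclideanSpace ℝ (Fin d)) {s : Set (EuclideanSpace ℝ (Fin d))} (hs : MeasurableSet s) :
    MeasurableSet ((fun x => x + c) '' s) := by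
  have h : (fun x : EuclideanSpace ℝ (Fin d) => x + c) '' s = (fun x : EuclideanSpace ℝ (Fin d) => x - c) ⁻¹' s := by
    ext y
    constructor
    · rintro ⟨x, hx, rfl⟩; simpa using hx
    · intro hy; exact ⟨y - c, hy, by simp⟩
  rw [h]
  exact (measurable_id.sub_const c) hs

lemma restrict_img (c : EuclideanSpace ℝ (Fin d)) {s : Set (EuclideanSpace ℝ (Fin d))} (hs : MeasurableSet s) :
    volume.restrict ((fun x => x + c) '' s)
      = Measure.map (fun x => x + c) (volume.restrict s) := by
  have hmeas : Measurable (fun x : EuclideanSpace ℝ (Fin d) => x + c) := measurable_add_const c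
  have hmap : Measure.map (fun x : EuclideanSpace ℝ (Fin d) => x + c) volume = volume :=
    (measurePreserving_add_right volume c).map_eq
  calc volume.restrict ((fun x => x + c) '' s)
      = (Measure.map (fun x => x + c) volume).restrict ((fun x => x + c) '' s) := by
        rw [hmap]
    _ = Measure.map (fun x => x + c)
          (volume.restrict ((fun x => x + c) ⁻¹' ((fun x => x + c) '' s))) :=
        Measure.restrict_map hmeas (img_measurable c hs)
    _ = _ := by rw [Set.preimage_image_eq s (add_left_injective c)]

lemma shift_embedding (c : EuclideanSpace ℝ (Fin d)) : MeasurableEmbedding (fun x : EuclideanSpace ℝ (Fin d) => x + c) :=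
  (Homeomorph.addRight c).toMeasurableEquiv.measurableEmbedding

variable {t s : ι → Set (EuclideanSpace ℝ (Fin d))} {τ : ι → EuclideanSpace ℝ (Fin d)}

lemma trFun_of_mem {M : Type*} [AddCommMonoid M] [TopologicalSpace M]
    (hdt : Pairwise (Function.onFun Disjoint t)) {j : ι} {x : EuclideanSpace ℝ (Fin d)} (hx : x ∈ t j) (f : EuclideanSpace ℝ (Fin d) → M) :
    trFun t τ f x = f (x - τ j) := by
  have h : ∀ k, k ≠ j → Set.indicator (t k) (fun z => f (z - τ k)) x = 0 := by
    intro k hk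
    exact Set.indicator_of_notMem (fun hxk => Set.disjoint_left.mp (hdt hk) hxk hx) _
  rw [trFun, tsum_eq_single j h, Set.indicator_of_mem hx]

lemma trFun_of_not_mem {M : Type*} [AddCommMonoid M] [TopologicalSpace M]
    {x : EuclideanSpace ℝ (Fin d)} (hx : x ∉ ⋃ j, t j) (f : EuclideanSpace ℝ (Fin d) → M) :
    trFun t τ f x = 0 := by
  have h : ∀ j, Set.indicator (t j) (fun z => f (z - τ j)) x = 0 := fun j =>
    Set.indicator_of_notMem (fun hxj => hx (Set.mem_iUnion.2 ⟨j, hxj⟩)) _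
  rw [trFun, tsum_congr h, tsum_zero]

lemma trFun_comp {M N : Type*} [AddCommMonoid M] [TopologicalSpace M]
    [AddCommMonoid N] [TopologicalSpace N]
    (hdt : Pairwise (Function.onFun Disjoint t)) (g : M → N) (hg : g 0 = 0) (f : EuclideanSpace ℝ (Fin d) → M) (x : EuclideanSpace ℝ (Fin d)) :
    g (trFun t τ f x) = trFun t τ (fun y => g (f y)) x := by
  by_cases hx : x ∈ ⋃ j, t j
  · obtain ⟨j, hj⟩ := Set.mem_iUnion.1 hx
    rw [trFun_of_mem hdt hj f, trFun_of_mem hdt hj (fun y => g (f y))]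
  · rw [trFun_of_not_mem hx f, trFun_of_not_mem hx (fun y => g (f y)), hg]

variable (hsm : ∀ j, MeasurableSet (s j)) (htm : ∀ j, MeasurableSet (t j))
  (hds : Pairwise (Function.onFun Disjoint s)) (hdt : Pairwise (Function.onFun Disjoint t))
  (hst : ∀ j, t j = (fun y => y + τ j) '' s j)

include hsm htm hds hdt hst

lemma trFun_lintegral (φ : EuclideanSpace ℝ (Fin d) → ENNReal) :
    ∫⁻ x in ⋃ j, t j, trFun t τ φ x = ∫⁻ x in ⋃ j, s j, φ x := by
  rw [Measure.restrict_iUnion hdt htm, Measure.restrict_iUnion hds hsm,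
    lintegral_sum_measure, lintegral_sum_measure]
  refine tsum_congr fun j => ?_
  have h1 : ∫⁻ x in t j, trFun t τ φ x = ∫⁻ x in t j, φ (x - τ j) := by
    refine lintegral_congr_ae ?_
    filter_upwards [ae_restrict_mem (htm j)] with x hx
    exact trFun_of_mem hdt hx φ
  rw [h1, hst j, restrict_img _ (hsm j), (shift_embedding (τ j)).lintegral_map]
  simp

lemma trFun_aesm_iff {M : Type*} [TopologicalSpace M] [TopologicalSpace.PseudoMetrizableSpace M]
    [AddCommMonoid M] (f : EuclideanSpace ℝ (Fin d) → M) :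
    AEStronglyMeasurable (trFun t τ f) (volume.restrict (⋃ j, t j)) ↔
      AEStronglyMeasurable f (volume.restrict (⋃ j, s j)) := by
  rw [Measure.restrict_iUnion hdt htm, Measure.restrict_iUnion hds hsm,
    aestronglyMeasurable_sum_measure_iff, aestronglyMeasurable_sum_measure_iff]
  refine forall_congr' fun j => ?_
  have h1 : AEStronglyMeasurable (trFun t τ f) (volume.restrict (t j)) ↔
      AEStronglyMeasurable (fun x => f (x - τ j)) (volume.restrict (t j)) := by
    refine aestronglyMeasurable_congr ?_
    filter_upwards [ae_restrict_mem (htm j)] with x hx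
    exact trFun_of_mem hdt hx f
  rw [h1, hst j, restrict_img _ (hsm j),
    (shift_embedding (τ j)).aestronglyMeasurable_map_iff]
  constructor
  · intro h; convert h using 1; funext y; simp [Function.comp]
  · intro h; convert h using 1; funext y; simp [Function.comp]

lemma trFun_integrableOn_iff {G : Type*} [NormedAddCommGroup G] (f : EuclideanSpace ℝ (Fin d) → G) :
    IntegrableOn (trFun t τ f) (⋃ j, t j) volume ↔ IntegrableOn f (⋃ j, s j) volume := by
  have haesm := trFun_aesm_iff hsm htm hds hdt hst f
  have hlint : ∫⁻ x in ⋃ j, t j, ‖trFun t τ f x‖₊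
      = ∫⁻ x in ⋃ j, s j, ‖f x‖₊ := by
    have hpt : ∀ x, (‖trFun t τ f x‖₊ : ENNReal)
        = trFun t τ (fun y => (‖f y‖₊ : ENNReal)) x := by
      intro x
      exact trFun_comp hdt (fun m : G => (‖m‖₊ : ENNReal)) (by simp) f x
    rw [lintegral_congr fun x => hpt x]
    exact trFun_lintegral hsm htm hds hdt hst _
  constructor
  · rintro ⟨h1, h2⟩
    refine ⟨haesm.1 h1, ?_⟩
    have h2' : ∫⁻ x in ⋃ j, t j, ‖trFun t τ f x‖₊ < ⊤ := h2
    exact (hlint ▸ h2' : ∫⁻ x in ⋃ j, s j, ‖f x‖₊ < ⊤)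
  · rintro ⟨h1, h2⟩
    refine ⟨haesm.2 h1, ?_⟩
    have h2' : ∫⁻ x in ⋃ j, s j, ‖f x‖₊ < ⊤ := h2
    exact (hlint ▸ h2' : ∫⁻ x in ⋃ j, t j, ‖trFun t τ f x‖₊ < ⊤)

lemma trFun_integral {G : Type*} [NormedAddCommGroup G] [NormedSpace ℝ G] (f : EuclideanSpace ℝ (Fin d) → G) :
    ∫ x in ⋃ j, t j, trFun t τ f x = ∫ x in ⋃ j, s j, f x := by
  by_cases hint : IntegrableOn f (⋃ j, s j) volume
  · have hint' : IntegrableOn (trFun t τ f) (⋃ j, t j) volume :=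
      (trFun_integrableOn_iff hsm htm hds hdt hst f).2 hint
    rw [integral_iUnion htm hdt hint', integral_iUnion hsm hds hint]
    refine tsum_congr fun j => ?_
    have h1 : ∫ x in t j, trFun t τ f x = ∫ x in t j, f (x - τ j) := by
      refine integral_congr_ae ?_
      filter_upwards [ae_restrict_mem (htm j)] with x hx
      exact trFun_of_mem hdt hx f
    rw [h1, hst j, restrict_img _ (hsm j), (shift_embedding (τ j)).integral_map]
    simp
  · have hint' : ¬ IntegrableOn (trFun t τ f) (⋃ j, t j) volume := fun h =>
      hint ((trFun_integrableOn_iff hsm htm hds hdt hst f).1 h)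
    rw [integral_undef hint', integral_undef hint]

end Helpers

/-- Lemma: breaking a domain `D = ⋃ⱼ Dⱼ` into finitely or countably many pieces and
translating them disjointly, a Riesz basis `{ψₙ}` of `L²(D)` transforms into the
Riesz basis `{∑ⱼ χ_{τⱼ(Dⱼ)} ψₙ∘τⱼ⁻¹}` of `L²(D̃)` with the same frame constants. -/
theorem stmt_6 {d : ℕ} {ι : Type*} [Countable ι]
    (D : Set (EuclideanSpace ℝ (Fin d))) (hDmeas : MeasurableSet D)
    (hDfin : volume D < ⊤)
    (Dj : ι → Set (EuclideanSpace ℝ (Fin d)))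
    (hDjmeas : ∀ j, MeasurableSet (Dj j))
    (hcover : D = ⋃ j, Dj j)
    (hpos : ∀ j, 0 < volume (Dj j))
    (hdisj : ∀ j k : ι, j ≠ k → Disjoint (Dj j) (Dj k))
    (τ : ι → EuclideanSpace ℝ (Fin d))
    (hdisj' : ∀ j k : ι, j ≠ k →
      Disjoint ((fun x => x + τ j) '' Dj j) ((fun x => x + τ k) '' Dj k))
    (ψ : ℕ → EuclideanSpace ℝ (Fin d) → ℂ) (A B : ℝ)
    (hψ : IsRieszBasisWith (volume.restrict D) ψ A B) :
    IsRieszBasisWith (volume.restrict (⋃ j, (fun x => x + τ j) '' Dj j))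
      (fun (n : ℕ) x =>
        ∑' j : ι, Set.indicator ((fun y => y + τ j) '' Dj j) (fun z => ψ n (z - τ j)) x)
      A B := by
  subst hcover
  obtain ⟨hA, hAB, hsyn, hanal⟩ := hψ
  set t : ι → Set (EuclideanSpace ℝ (Fin d)) := fun j => (fun x => x + τ j) '' Dj j with ht
  have htm : ∀ j, MeasurableSet (t j) := fun j => img_measurable (τ j) (hDjmeas j)
  have hds : Pairwise (Function.onFun Disjoint Dj) := fun j k h => hdisj j k h
  have hdt : Pairwise (Function.onFun Disjoint t) := fun j k h => hdisj' j k h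
  have hst : ∀ j, t j = (fun y => y + τ j) '' Dj j := fun j => rfl
  -- the reverse data: from t back to Dj via translation by -τ j
  have hst' : ∀ j, Dj j = (fun y => y + (-τ j)) '' t j := by
    intro j
    rw [ht, Set.image_image]
    simp
  -- the transported basis functions, as trFun
  have hψ' : ∀ n x, (∑' j : ι,
      Set.indicator ((fun y => y + τ j) '' Dj j) (fun z => ψ n (z - τ j)) x)
      = trFun t τ (ψ n) x := fun n x => rfl
  refine ⟨hA, hAB, ?_, ?_⟩
  · -- synthesis inequalities
    intro sF a
    have hpt : ∀ x, (∑ n ∈ sF, a n * trFun t τ (ψ n) x)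
        = trFun t τ (fun y => ∑ n ∈ sF, a n * ψ n y) x := by
      intro x
      by_cases hx : x ∈ ⋃ j, t j
      · obtain ⟨j, hj⟩ := Set.mem_iUnion.1 hx
        rw [trFun_of_mem hdt hj]
        refine Finset.sum_congr rfl fun n _ => ?_
        rw [trFun_of_mem hdt hj]
      · rw [trFun_of_not_mem hx]
        refine Finset.sum_eq_zero fun n _ => ?_
        rw [trFun_of_not_mem hx, mul_zero]
    have hpt2 : ∀ x, ‖∑ n ∈ sF, a n * trFun t τ (ψ n) x‖ ^ 2
        = trFun t τ (fun y => ‖∑ n ∈ sF, a n * ψ n y‖ ^ 2) x := by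
      intro x
      rw [hpt x]
      exact trFun_comp hdt (fun z : ℂ => ‖z‖ ^ 2) (by simp) _ x
    have key : (∫ x in ⋃ j, t j, ‖∑ n ∈ sF, a n * trFun t τ (ψ n) x‖ ^ 2)
        = ∫ x in ⋃ j, Dj j, ‖∑ n ∈ sF, a n * ψ n x‖ ^ 2 := by
      rw [integral_congr_ae (Filter.Eventually.of_forall hpt2)]
      exact trFun_integral hDjmeas htm hds hdt hst _
    simp only [hψ']
    rw [key]
    exact hsyn sF a
  · -- analysis inequalities
    intro w hw
    -- the pulled-back function on D
    set w' : EuclideanSpace ℝ (Fin d) → ℂ := trFun Dj (fun j => -τ j) w with hw'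
    have htm' : ∀ j, MeasurableSet (t j) := htm
    -- norms transfer
    have hptn : ∀ x, ‖w' x‖ ^ 2 = trFun Dj (fun j => -τ j) (fun y => ‖w y‖ ^ 2) x := by
      intro x
      exact trFun_comp hds (fun z : ℂ => ‖z‖ ^ 2) (by simp) w x
    have hnorm : (∫ x in ⋃ j, Dj j, ‖w' x‖ ^ 2)
        = ∫ x in ⋃ j, t j, ‖w x‖ ^ 2 := by
      rw [integral_congr_ae (Filter.Eventually.of_forall hptn)]
      exact trFun_integral htm hDjmeas hdt hds hst' _
    -- membership in L²
    have haesm : AEStronglyMeasurable w' (volume.restrict (⋃ j, Dj j)) :=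
      (trFun_aesm_iff htm hDjmeas hdt hds hst' w).2 hw.1
    have hw'mem : MemLp w' 2 (volume.restrict (⋃ j, Dj j)) := by
      rw [memLp_two_iff_integrable_sq_norm haesm]
      have h1 : Integrable (fun x => ‖w x‖ ^ 2) (volume.restrict (⋃ j, t j)) :=
        (memLp_two_iff_integrable_sq_norm hw.1).1 hw
      have h2 : IntegrableOn (trFun Dj (fun j => -τ j) (fun y => ‖w y‖ ^ 2))
          (⋃ j, Dj j) volume :=
        (trFun_integrableOn_iff htm hDjmeas hdt hds hst' _).2 h1
      exact h2.congr (Filter.Eventually.of_forall fun x => (hptn x).symm)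
    -- inner products transfer
    have hinner : ∀ n, (∫ x in ⋃ j, t j, w x * (starRingEnd ℂ) (trFun t τ (ψ n) x))
        = ∫ x in ⋃ j, Dj j, w' x * (starRingEnd ℂ) (ψ n x) := by
      intro n
      have hpt3 : ∀ x ∈ ⋃ j, t j, w x * (starRingEnd ℂ) (trFun t τ (ψ n) x)
          = trFun t τ (fun y => w' y * (starRingEnd ℂ) (ψ n y)) x := by
        intro x hx
        obtain ⟨j, hj⟩ := Set.mem_iUnion.1 hx
        rw [trFun_of_mem hdt hj, trFun_of_mem hdt hj]
        have hxj : x - τ j ∈ Dj j := by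
          obtain ⟨y, hy, rfl⟩ := hj
          simpa using hy
        have : w' (x - τ j) = w x := by
          rw [hw', trFun_of_mem hds hxj]
          simp
        rw [this]
      have := trFun_integral hDjmeas htm hds hdt hst
        (fun y => w' y * (starRingEnd ℂ) (ψ n y))
      rw [← this]
      refine setIntegral_congr_fun (MeasurableSet.iUnion htm) ?_
      intro x hx
      exact hpt3 x hx
    have := hanal w' hw'mem
    simp only [hψ']
    constructor
    · calc A * ∫ x in ⋃ j, t j, ‖w x‖ ^ 2
          = A * ∫ x in ⋃ j, Dj j, ‖w' x‖ ^ 2 := by rw [hnorm]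
        _ ≤ ∑' n : ℕ, ‖∫ x in ⋃ j, Dj j, w' x * (starRingEnd ℂ) (ψ n x)‖ ^ 2 := this.1
        _ = ∑' n : ℕ, ‖∫ x in ⋃ j, t j, w x * (starRingEnd ℂ) (trFun t τ (ψ n) x)‖ ^ 2 := by
            refine tsum_congr fun n => ?_
            rw [hinner n]
    · calc ∑' n : ℕ, ‖∫ x in ⋃ j, t j, w x * (starRingEnd ℂ) (trFun t τ (ψ n) x)‖ ^ 2
          = ∑' n : ℕ, ‖∫ x in ⋃ j, Dj j, w' x * (starRingEnd ℂ) (ψ n x)‖ ^ 2 := by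
            refine tsum_congr fun n => ?_
            rw [hinner n]
        _ ≤ B * ∫ x in ⋃ j, Dj j, ‖w' x‖ ^ 2 := this.2
        _ = B * ∫ x in ⋃ j, t j, ‖w x‖ ^ 2 := by rw [hnorm]
end

section
/- Let {λ_n}_{n∈Z} ⊂ R and let m ∈ N ∪ {∞}. The sequence {g_n}_{n∈Z}, where g_n(x) = ∑_{k=0}^{m−1} e^{2πi (x − b_k) λ_n} χ_{J_k}(x), is a Riesz basis for L²(J) if and only if {x ↦ e^{2πi x λ_n}}_{n∈Z} is a Riesz basis for L²([0,1)); moreover the two bases have the same Riesz (frame) constants. Conversely, the sequence {g̃_n}_{n∈Z}, where g̃_n(x) = ∑_{k=0}^{m−1} e^{2πi (x + b_k) λ_n} χ_{I_k}(x), is a Riesz basis for L²([0,1)) if and only if {x ↦ e^{2πi x λ_n}}_{n∈Z} is a Riesz basis for L²(J), with the same Riesz constants. -/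
open MeasureTheory Complex Set

lemma riesz_transfer_dir {α β : Type*} [MeasurableSpace α] [MeasurableSpace β]
    {μ : Measure α} {ν : Measure β} {φ : α → β} {ψ : β → α}
    (hφ : MeasurePreserving φ μ ν) (hψ : MeasurePreserving ψ ν μ)
    (hli : ∀ᵐ x ∂μ, ψ (φ x) = x)
    {ι : Type*} {u : ι → α → ℂ} {v : ι → β → ℂ}
    (hv : ∀ n, AEStronglyMeasurable (v n) ν)
    (hu : ∀ n, u n =ᵐ[μ] fun x => v n (φ x))
    {A B : ℝ} (h : IsRieszBasisWith ν v A B) : IsRieszBasisWith μ u A B := by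
  obtain ⟨hA, hAB, h3, h4⟩ := h
  refine ⟨hA, hAB, ?_, ?_⟩
  · intro s c
    have hsum : ∀ᵐ x ∂μ, ∀ n ∈ s, u n x = v n (φ x) :=
      (MeasureTheory.ae_ball_iff s.countable_toSet).2 fun n _ => hu n
    have h1 : (fun x => ‖∑ n ∈ s, c n * u n x‖ ^ 2) =ᵐ[μ]
        fun x => ‖∑ n ∈ s, c n * v n (φ x)‖ ^ 2 := by
      filter_upwards [hsum] with x hx
      congr 2
      exact Finset.sum_congr rfl fun n hn => by rw [hx n hn]
    have hG : AEStronglyMeasurable (fun y => ‖∑ n ∈ s, c n * v n y‖ ^ 2) (μ.map φ) := by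
      rw [hφ.map_eq]
      have : AEStronglyMeasurable (fun y => ∑ n ∈ s, c n * v n y) ν :=
        Finset.aestronglyMeasurable_fun_sum s fun n _ => aestronglyMeasurable_const.mul (hv n)
      exact this.norm.pow 2
    have e1 : (∫ x, ‖∑ n ∈ s, c n * u n x‖ ^ 2 ∂μ) = ∫ y, ‖∑ n ∈ s, c n * v n y‖ ^ 2 ∂ν := by
      rw [integral_congr_ae h1, ← hφ.map_eq, integral_map hφ.aemeasurable hG]
    rw [e1]; exact h3 s c
  · intro w hw
    have hw' : MemLp (w ∘ ψ) 2 ν := hw.comp_measurePreserving hψ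
    have e2' : (∫ x, ‖w x‖ ^ 2 ∂μ) = ∫ y, ‖w (ψ y)‖ ^ 2 ∂ν := by
      have hG : AEStronglyMeasurable (fun x => ‖w x‖ ^ 2) (ν.map ψ) := by
        rw [hψ.map_eq]
        exact hw.1.norm.pow 2
      rw [← hψ.map_eq, integral_map hψ.aemeasurable hG]
    have e3 : ∀ n, (∫ x, w x * (starRingEnd ℂ) (u n x) ∂μ)
        = ∫ y, w (ψ y) * (starRingEnd ℂ) (v n y) ∂ν := by
      intro n
      have h1 : (fun x => w x * (starRingEnd ℂ) (u n x)) =ᵐ[μ]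
          fun x => w (ψ (φ x)) * (starRingEnd ℂ) (v n (φ x)) := by
        filter_upwards [hu n, hli] with x hx hx2
        rw [hx, hx2]
      have hG : AEStronglyMeasurable (fun y => w (ψ y) * (starRingEnd ℂ) (v n y)) (μ.map φ) := by
        rw [hφ.map_eq]
        exact hw'.1.mul ((Complex.continuous_conj.comp_aestronglyMeasurable (hv n)))
      rw [integral_congr_ae h1, ← hφ.map_eq, integral_map hφ.aemeasurable hG]
    have e4 : (∑' n : ι, ‖∫ x, w x * (starRingEnd ℂ) (u n x) ∂μ‖ ^ 2)
        = ∑' n : ι, ‖∫ y, w (ψ y) * (starRingEnd ℂ) (v n y) ∂ν‖ ^ 2 :=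
      tsum_congr fun n => by rw [e3 n]
    rw [e2', e4]
    exact h4 (w ∘ ψ) hw'

lemma riesz_transfer_iff {α β : Type*} [MeasurableSpace α] [MeasurableSpace β]
    {μ : Measure α} {ν : Measure β} {φ : α → β} {ψ : β → α}
    (hφ : MeasurePreserving φ μ ν) (hψ : MeasurePreserving ψ ν μ)
    (hli : ∀ᵐ x ∂μ, ψ (φ x) = x) (hri : ∀ᵐ y ∂ν, φ (ψ y) = y)
    {ι : Type*} {u : ι → α → ℂ} {v : ι → β → ℂ}
    (hv : ∀ n, AEStronglyMeasurable (v n) ν)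
    (hu : ∀ n, u n =ᵐ[μ] fun x => v n (φ x))
    {A B : ℝ} : IsRieszBasisWith μ u A B ↔ IsRieszBasisWith ν v A B := by
  have hu' : ∀ n, AEStronglyMeasurable (u n) μ := fun n =>
    (((hv n).comp_measurePreserving hφ)).congr (hu n).symm
  have hv' : ∀ n, v n =ᵐ[ν] fun y => u n (ψ y) := by
    intro n
    have h1 : (fun y => u n (ψ y)) =ᵐ[ν] fun y => v n (φ (ψ y)) :=
      hψ.quasiMeasurePreserving.ae_eq (hu n)
    refine (h1.trans ?_).symm
    filter_upwards [hri] with y hy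
    rw [hy]
  exact ⟨fun h => riesz_transfer_dir hψ hφ hri hu' hv' h,
    fun h => riesz_transfer_dir hφ hψ hli hv hu h⟩

/-- Lemma: `{gₙ}`, with `gₙ = ∑ₖ e^{2πi(x−bₖ)λₙ}χ_{Jₖ}`, is a Riesz basis for `L²(J)`
iff `{e^{2πixλₙ}}` is a Riesz basis for `L²([0,1))`, with the same constants; and
`{g̃ₙ}`, with `g̃ₙ = ∑ₖ e^{2πi(x+bₖ)λₙ}χ_{Iₖ}`, is a Riesz basis for `L²([0,1))`
iff `{e^{2πixλₙ}}` is a Riesz basis for `L²(J)`, with the same constants. -/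
theorem stmt_7 (m : ℕ∞) (hm : 1 ≤ m) (a b : ℕ → ℝ)
    (ha0 : a 0 = 0)
    (hamono : ∀ j k : ℕ, j < k → (k : ℕ∞) ≤ m → a j < a k)
    (hafin : ∀ M : ℕ, m = (M : ℕ∞) → a M = 1)
    (hainf : m = ⊤ → (⨆ j, a j) = 1)
    (hb0 : b 0 = 0)
    (hbmono : ∀ j k : ℕ, j < k → (k : ℕ∞) < m → b j < b k)
    (J : Set ℝ)
    (hJ : J = ⋃ j ∈ {j : ℕ | (j : ℕ∞) < m}, Set.Ico (a j + b j) (a (j + 1) + b j))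
    (lam : ℤ → ℝ)
    (g gt : ℤ → ℝ → ℂ)
    (hg : g = fun (n : ℤ) (x : ℝ) =>
      ∑' k : {k : ℕ // (k : ℕ∞) < m},
        Set.indicator (Set.Ico (a k + b k) (a (k + 1) + b k))
          (fun y => e2 ((y - b k) * lam n)) x)
    (hgt : gt = fun (n : ℤ) (x : ℝ) =>
      ∑' k : {k : ℕ // (k : ℕ∞) < m},
        Set.indicator (Set.Ico (a k) (a (k + 1)))
          (fun y => e2 ((y + b k) * lam n)) x) :
    (∀ A B : ℝ,
      IsRieszBasisWith (volume.restrict J) g A B ↔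
      IsRieszBasisWith (volume.restrict (Set.Ico (0:ℝ) 1))
        (fun (n : ℤ) (x : ℝ) => e2 (x * lam n)) A B) ∧
    (∀ A B : ℝ,
      IsRieszBasisWith (volume.restrict (Set.Ico (0:ℝ) 1)) gt A B ↔
      IsRieszBasisWith (volume.restrict J)
        (fun (n : ℤ) (x : ℝ) => e2 (x * lam n)) A B) := by
  classical
  set T := {k : ℕ // (k : ℕ∞) < m} with hT
  set I : ℕ → Set ℝ := fun k => Set.Ico (a k) (a (k + 1)) with hIdef
  set Jk : ℕ → Set ℝ := fun k => Set.Ico (a k + b k) (a (k + 1) + b k) with hJkdef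
  -- basic monotonicity facts
  have amono_le : ∀ j k : ℕ, j ≤ k → (k : ℕ∞) ≤ m → a j ≤ a k := by
    intro j k hjk hk
    rcases eq_or_lt_of_le hjk with rfl | h
    · exact le_refl _
    · exact (hamono j k h hk).le
  have hble : ∀ k : ℕ, (k : ℕ∞) < m → 0 ≤ b k := by
    intro k hk
    rcases Nat.eq_zero_or_pos k with rfl | h
    · exact hb0.ge
    · exact (hb0 ▸ hbmono 0 k h hk).le
  have hkm_succ : ∀ k : ℕ, (k : ℕ∞) < m → ((k + 1 : ℕ) : ℕ∞) ≤ m := by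
    intro k hk
    have : ((k : ℕ∞) + 1) ≤ m := (ENat.add_one_le_iff (by simp)).2 hk
    simpa [Nat.cast_add] using this
  have haub : ∀ k : ℕ, (k : ℕ∞) ≤ m → a k ≤ 1 := by
    intro k hk
    rcases eq_or_ne m ⊤ with rfl | hne
    · have hbdd : BddAbove (Set.range a) := by
        by_contra hb
        have h0 := Real.iSup_of_not_bddAbove hb
        rw [hainf rfl] at h0; norm_num at h0
      calc a k ≤ ⨆ j, a j := le_ciSup hbdd k
        _ = 1 := hainf rfl
    · obtain ⟨M, rfl⟩ := WithTop.ne_top_iff_exists.1 hne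
      have hkM : k ≤ M := by
        exact WithTop.coe_le_coe.1 hk
      exact (hafin M rfl) ▸ amono_le k M hkM (le_refl _)
  -- uniqueness of interval membership
  have hIlt : ∀ k l : ℕ, k < l → (l : ℕ∞) < m → ∀ x : ℝ, x ∈ I k → x ∈ I l → False := by
    intro k l hkl hl x hxk hxl
    have h1 : a (k + 1) ≤ a l := amono_le (k + 1) l hkl hl.le
    have := hxk.2; have := hxl.1
    simp only [hIdef, Set.mem_Ico] at hxk hxl
    linarith [hxk.2, hxl.1]
  have hIuniq : ∀ k l : ℕ, (k : ℕ∞) < m → (l : ℕ∞) < m → ∀ x : ℝ, x ∈ I k → x ∈ I l → k = l := by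
    intro k l hk hl x hxk hxl
    rcases Nat.lt_trichotomy k l with h | h | h
    · exact absurd (hIlt k l h hl x hxk hxl) not_false
    · exact h
    · exact absurd (hIlt l k h hk x hxl hxk) not_false
  have hJlt : ∀ k l : ℕ, k < l → (l : ℕ∞) < m → ∀ x : ℝ, x ∈ Jk k → x ∈ Jk l → False := by
    intro k l hkl hl x hxk hxl
    have h1 : a (k + 1) ≤ a l := amono_le (k + 1) l hkl hl.le
    have h2 : b k < b l := hbmono k l hkl hl
    simp only [hJkdef, Set.mem_Ico] at hxk hxl
    linarith [hxk.2, hxl.1]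
  have hJuniq : ∀ k l : ℕ, (k : ℕ∞) < m → (l : ℕ∞) < m → ∀ x : ℝ, x ∈ Jk k → x ∈ Jk l → k = l := by
    intro k l hk hl x hxk hxl
    rcases Nat.lt_trichotomy k l with h | h | h
    · exact absurd (hJlt k l h hl x hxk hxl) not_false
    · exact h
    · exact absurd (hJlt l k h hk x hxl hxk) not_false
  -- covering
  have hcov : ∀ x ∈ Set.Ico (0 : ℝ) 1, ∃ k : ℕ, (k : ℕ∞) < m ∧ x ∈ I k := by
    intro x hx
    obtain ⟨hx0, hx1⟩ := hx
    have hex : ∃ j : ℕ, x < a j ∧ (j : ℕ∞) ≤ m := by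
      rcases eq_or_ne m ⊤ with rfl | hne
      · have : ∃ j : ℕ, x < a j := by
          by_contra hh
          push_neg at hh
          have : (⨆ j, a j) ≤ x := ciSup_le hh
          rw [hainf rfl] at this
          linarith
        obtain ⟨j, hj⟩ := this
        exact ⟨j, hj, le_top⟩
      · obtain ⟨M, rfl⟩ := WithTop.ne_top_iff_exists.1 hne
        exact ⟨M, by rw [hafin M rfl]; exact hx1, le_refl _⟩
    set N := Nat.find hex with hN
    obtain ⟨hN1, hN2⟩ := Nat.find_spec hex
    have hN0 : N ≠ 0 := by
      intro h0
      rw [hN] at h0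
      have := (Nat.find_spec hex).1
      rw [h0, ha0] at this
      linarith
    obtain ⟨k, hk⟩ := Nat.exists_eq_succ_of_ne_zero hN0
    have hkN : k < N := by omega
    have hkm : (k : ℕ∞) < m := by
      have h1 : (k : ℕ∞) < (N : ℕ∞) := by exact_mod_cast hkN
      exact lt_of_lt_of_le h1 hN2
    have hak : a k ≤ x := by
      by_contra hc
      push_neg at hc
      exact absurd (Nat.find_min hex hkN ⟨hc, hkm.le⟩) not_false
    refine ⟨k, hkm, hak, ?_⟩
    rw [← Nat.succ_eq_add_one, ← hk]
    exact hN1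
  have hIeq : Set.Ico (0 : ℝ) 1 = ⋃ k : T, I (k : ℕ) := by
    ext x
    constructor
    · intro hx
      obtain ⟨k, hk, hxk⟩ := hcov x hx
      exact Set.mem_iUnion.2 ⟨⟨k, hk⟩, hxk⟩
    · intro hx
      obtain ⟨k, hxk⟩ := Set.mem_iUnion.1 hx
      simp only [hIdef, Set.mem_Ico] at hxk
      constructor
      · calc (0 : ℝ) = a 0 := ha0.symm
          _ ≤ a (k : ℕ) := amono_le 0 k (Nat.zero_le _) k.2.le
          _ ≤ x := hxk.1
      · calc x < a ((k : ℕ) + 1) := hxk.2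
          _ ≤ 1 := haub _ (hkm_succ _ k.2)
  have hJeq : J = ⋃ k : T, Jk (k : ℕ) := by
    rw [hJ]
    exact Set.biUnion_eq_iUnion _ _
  have hJmeas : MeasurableSet J := by
    rw [hJeq]; exact MeasurableSet.iUnion fun k => measurableSet_Ico
  -- the translation maps
  set φ : ℝ → ℝ := fun x =>
    x + (∑' k : T, Set.indicator (I (k : ℕ)) (fun _ => ENNReal.ofReal (b (k : ℕ))) x).toReal
    with hφdef
  set ψ : ℝ → ℝ := fun y =>
    y - (∑' k : T, Set.indicator (Jk (k : ℕ)) (fun _ => ENNReal.ofReal (b (k : ℕ))) y).toReal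
    with hψdef
  have hφval : ∀ k : ℕ, (hk : (k : ℕ∞) < m) → ∀ x ∈ I k, φ x = x + b k := by
    intro k hk x hx
    have ht : (∑' l : T, Set.indicator (I (l : ℕ)) (fun _ => ENNReal.ofReal (b (l : ℕ))) x)
        = ENNReal.ofReal (b k) := by
      rw [tsum_eq_single (⟨k, hk⟩ : T) ?_]
      · simp [Set.indicator_of_mem hx]
      · intro l hl
        refine Set.indicator_of_notMem (fun hxl => hl ?_) _
        exact Subtype.ext (hIuniq (l : ℕ) k l.2 hk x hxl hx)
    rw [hφdef]
    simp only [ht, ENNReal.toReal_ofReal (hble k hk)]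
  have hψval : ∀ k : ℕ, (hk : (k : ℕ∞) < m) → ∀ y ∈ Jk k, ψ y = y - b k := by
    intro k hk y hy
    have ht : (∑' l : T, Set.indicator (Jk (l : ℕ)) (fun _ => ENNReal.ofReal (b (l : ℕ))) y)
        = ENNReal.ofReal (b k) := by
      rw [tsum_eq_single (⟨k, hk⟩ : T) ?_]
      · simp [Set.indicator_of_mem hy]
      · intro l hl
        refine Set.indicator_of_notMem (fun hyl => hl ?_) _
        exact Subtype.ext (hJuniq (l : ℕ) k l.2 hk y hyl hy)
    rw [hψdef]
    simp only [ht, ENNReal.toReal_ofReal (hble k hk)]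
  have hφmeas : Measurable φ :=
    measurable_id.add ((Measurable.ennreal_tsum fun k =>
      (measurable_const.indicator measurableSet_Ico)).ennreal_toReal)
  have hψmeas : Measurable ψ :=
    measurable_id.sub ((Measurable.ennreal_tsum fun k =>
      (measurable_const.indicator measurableSet_Ico)).ennreal_toReal)
  -- restriction decompositions
  have hIpair : Pairwise (Function.onFun Disjoint fun k : T => I (k : ℕ)) := by
    intro k l hne
    exact Set.disjoint_left.2 fun x hxk hxl =>
      hne (Subtype.ext (hIuniq (k : ℕ) (l : ℕ) k.2 l.2 x hxk hxl))
  have hJpair : Pairwise (Function.onFun Disjoint fun k : T => Jk (k : ℕ)) := by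
    intro k l hne
    exact Set.disjoint_left.2 fun x hxk hxl =>
      hne (Subtype.ext (hJuniq (k : ℕ) (l : ℕ) k.2 l.2 x hxk hxl))
  have hrIco : volume.restrict (Set.Ico (0:ℝ) 1)
      = Measure.sum (fun k : T => volume.restrict (I (k : ℕ))) := by
    rw [hIeq]
    exact Measure.restrict_iUnion hIpair fun k => measurableSet_Ico
  have hrJ : volume.restrict J = Measure.sum (fun k : T => volume.restrict (Jk (k : ℕ))) := by
    rw [hJeq]
    exact Measure.restrict_iUnion hJpair fun k => measurableSet_Ico
  have hpreim : ∀ k : ℕ, ((· + b k) ⁻¹' Jk k) = I k := by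
    intro k
    ext x
    simp only [hJkdef, hIdef, Set.mem_preimage, Set.mem_Ico]
    constructor
    · rintro ⟨h1, h2⟩; constructor <;> linarith
    · rintro ⟨h1, h2⟩; constructor <;> linarith
  have hpreim' : ∀ k : ℕ, ((· + -b k) ⁻¹' I k) = Jk k := by
    intro k
    ext x
    simp only [hJkdef, hIdef, Set.mem_preimage, Set.mem_Ico]
    constructor
    · rintro ⟨h1, h2⟩; constructor <;> linarith
    · rintro ⟨h1, h2⟩; constructor <;> linarith
  have hpieceφ : ∀ k : T, Measure.map φ (volume.restrict (I (k : ℕ)))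
      = volume.restrict (Jk (k : ℕ)) := by
    intro k
    have h1 : φ =ᵐ[volume.restrict (I (k : ℕ))] (· + b (k : ℕ)) :=
      (ae_restrict_iff' measurableSet_Ico).2
        (Filter.Eventually.of_forall fun x hx => hφval (k : ℕ) k.2 x hx)
    rw [Measure.map_congr h1]
    have h2 := (measurePreserving_add_right volume (b (k : ℕ))).restrict_preimage
      (measurableSet_Ico (a := a (k : ℕ) + b (k : ℕ)) (b := a ((k : ℕ) + 1) + b (k : ℕ)))
    rw [show ((· + b (k : ℕ)) ⁻¹' Set.Ico (a (k : ℕ) + b (k : ℕ)) (a ((k : ℕ) + 1) + b (k : ℕ)))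
        = I (k : ℕ) from hpreim (k : ℕ)] at h2
    exact h2.map_eq
  have hpieceψ : ∀ k : T, Measure.map ψ (volume.restrict (Jk (k : ℕ)))
      = volume.restrict (I (k : ℕ)) := by
    intro k
    have h1 : ψ =ᵐ[volume.restrict (Jk (k : ℕ))] (· + -b (k : ℕ)) := by
      refine (ae_restrict_iff' measurableSet_Ico).2
        (Filter.Eventually.of_forall fun y hy => ?_)
      rw [hψval (k : ℕ) k.2 y hy]; ring
    rw [Measure.map_congr h1]
    have h2 := (measurePreserving_add_right volume (-b (k : ℕ))).restrict_preimage
      (measurableSet_Ico (a := a (k : ℕ)) (b := a ((k : ℕ) + 1)))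
    rw [show ((· + -b (k : ℕ)) ⁻¹' Set.Ico (a (k : ℕ)) (a ((k : ℕ) + 1)))
        = Jk (k : ℕ) from hpreim' (k : ℕ)] at h2
    exact h2.map_eq
  have hmapφ : MeasurePreserving φ (volume.restrict (Set.Ico (0:ℝ) 1)) (volume.restrict J) := by
    refine ⟨hφmeas, ?_⟩
    rw [hrIco, Measure.map_sum hφmeas.aemeasurable, hrJ]
    exact congrArg _ (funext fun k => hpieceφ k)
  have hmapψ : MeasurePreserving ψ (volume.restrict J) (volume.restrict (Set.Ico (0:ℝ) 1)) := by
    refine ⟨hψmeas, ?_⟩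
    rw [hrJ, Measure.map_sum hψmeas.aemeasurable, hrIco]
    exact congrArg _ (funext fun k => hpieceψ k)
  have hmemJ : ∀ k : ℕ, (k : ℕ∞) < m → ∀ x ∈ I k, x + b k ∈ Jk k := by
    intro k hk x hx
    simp only [hIdef, Set.mem_Ico] at hx
    exact ⟨by linarith [hx.1], by linarith [hx.2]⟩
  have hmemI : ∀ k : ℕ, (k : ℕ∞) < m → ∀ y ∈ Jk k, y - b k ∈ I k := by
    intro k hk y hy
    simp only [hJkdef, Set.mem_Ico] at hy
    exact ⟨by linarith [hy.1], by linarith [hy.2]⟩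
  have hli : ∀ᵐ x ∂(volume.restrict (Set.Ico (0:ℝ) 1)), ψ (φ x) = x := by
    refine (ae_restrict_iff' measurableSet_Ico).2 (Filter.Eventually.of_forall fun x hx => ?_)
    obtain ⟨k, hk, hxk⟩ := hcov x hx
    rw [hφval k hk x hxk, hψval k hk _ (hmemJ k hk x hxk)]
    ring
  have hri : ∀ᵐ y ∂(volume.restrict J), φ (ψ y) = y := by
    refine (ae_restrict_iff' hJmeas).2 (Filter.Eventually.of_forall fun y hy => ?_)
    rw [hJeq] at hy
    obtain ⟨k, hyk⟩ := Set.mem_iUnion.1 hy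
    rw [hψval (k : ℕ) k.2 y hyk, hφval (k : ℕ) k.2 _ (hmemI (k : ℕ) k.2 y hyk)]
    ring
  have hecont : ∀ (lam' : ℝ), Continuous fun x : ℝ => e2 (x * lam') := by
    intro lam'
    unfold e2
    fun_prop
  have hg_ae : ∀ n : ℤ, g n =ᵐ[volume.restrict J] fun y => e2 (ψ y * lam n) := by
    intro n
    refine (ae_restrict_iff' hJmeas).2 (Filter.Eventually.of_forall fun y hy => ?_)
    rw [hJeq] at hy
    obtain ⟨k, hyk⟩ := Set.mem_iUnion.1 hy
    have hgy : g n y = ∑' l : T,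
        (Set.indicator (Set.Ico (a (l : ℕ) + b (l : ℕ)) (a ((l : ℕ) + 1) + b (l : ℕ)))
          (fun z => e2 ((z - b (l : ℕ)) * lam n)) y) := by
      simp only [hg]; rfl
    rw [hgy, tsum_eq_single k (fun l hl =>
      Set.indicator_of_notMem
        (fun hyl => hl (Subtype.ext (hJuniq (l : ℕ) (k : ℕ) l.2 k.2 y hyl hyk))) _)]
    simp only [Set.indicator_of_mem hyk, hψval (k : ℕ) k.2 y hyk]
  have hgt_ae : ∀ n : ℤ, gt n =ᵐ[volume.restrict (Set.Ico (0:ℝ) 1)]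
      fun x => e2 (φ x * lam n) := by
    intro n
    refine (ae_restrict_iff' measurableSet_Ico).2 (Filter.Eventually.of_forall fun x hx => ?_)
    obtain ⟨k, hk, hxk⟩ := hcov x hx
    have hgty : gt n x = ∑' l : T,
        (Set.indicator (Set.Ico (a (l : ℕ)) (a ((l : ℕ) + 1)))
          (fun z => e2 ((z + b (l : ℕ)) * lam n)) x) := by
      simp only [hgt]; rfl
    rw [hgty, tsum_eq_single (⟨k, hk⟩ : T) (fun l hl =>
      Set.indicator_of_notMem
        (fun hxl => hl (Subtype.ext (hIuniq (l : ℕ) k l.2 hk x hxl hxk))) _)]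
    simp only [Set.indicator_of_mem hxk, hφval k hk x hxk]
  constructor
  · intro A B
    exact riesz_transfer_iff hmapψ hmapφ hri hli
      (fun n => (hecont (lam n)).aestronglyMeasurable) hg_ae
  · intro A B
    exact riesz_transfer_iff hmapφ hmapψ hli hri
      (fun n => (hecont (lam n)).aestronglyMeasurable) hgt_ae
end
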